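/- Let F be a subfield of ℝ and d ∈ F with d > 0 and √d ∉ F. If f ∈ F[x] is nonnegative on [−√d, √d], then f lies in the preordering of F[x] generated by d − x², i.e., f = σ₀ + σ₁(d − x²) with σ₀, σ₁ ∈ ∑ F_{≥0} F[x]². -/

import Mathlib

open Polynomial

set_option maxHeartbeats 1000000
set_option synthInstance.maxHeartbeats 400000

noncomputable def pev (F : Subfield ℝ) (f : F[X]) (x : ℝ) : ℝ := Polynomial.aeval x f

/-- `σ` is a finite sum of terms `t·g²` with `t ∈ F`, `t ≥ 0`, `g ∈ F[x]`. -/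
def SumWtSq (F : Subfield ℝ) (σ : F[X]) : Prop :=
  ∃ (n : ℕ) (t : Fin n → F) (g : Fin n → F[X]),
    (∀ i, (0:ℝ) ≤ (t i : ℝ)) ∧ σ = ∑ i, C (t i) * g i ^ 2

namespace Stmt5Aux
open Finset

variable {F : Subfield ℝ}

def SS (F : Subfield ℝ) : Set F[X] := {p | ∃ (t : F) (g : F[X]), 0 ≤ (t:ℝ) ∧ p = C t * g^2}

lemma sws_iff (σ : F[X]) : SumWtSq F σ ↔ σ ∈ AddSubmonoid.closure (SS F) := by
  constructor
  · rintro ⟨n, t, g, ht, rfl⟩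
    exact AddSubmonoid.sum_mem _ (fun i _ => AddSubmonoid.subset_closure ⟨t i, g i, ht i, rfl⟩)
  · intro h
    obtain ⟨l, hl, rfl⟩ := AddSubmonoid.exists_list_of_mem_closure h
    choose t g ht hp using fun (i : Fin l.length) => hl (l.get i) (List.get_mem l i)
    refine ⟨l.length, t, g, ht, ?_⟩
    conv_lhs => rw [← List.ofFn_get l]
    rw [List.sum_ofFn]
    exact Finset.sum_congr rfl (fun i _ => hp i)

lemma sws_zero : SumWtSq F 0 := (sws_iff 0).2 (AddSubmonoid.zero_mem _)

lemma sws_add {σ τ : F[X]} (hσ : SumWtSq F σ) (hτ : SumWtSq F τ) : SumWtSq F (σ + τ) :=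
  (sws_iff _).2 (AddSubmonoid.add_mem _ ((sws_iff _).1 hσ) ((sws_iff _).1 hτ))

lemma sws_term {t : F} (ht : 0 ≤ (t:ℝ)) (g : F[X]) : SumWtSq F (C t * g^2) :=
  (sws_iff _).2 (AddSubmonoid.subset_closure ⟨t, g, ht, rfl⟩)

lemma sws_mul {σ τ : F[X]} (hσ : SumWtSq F σ) (hτ : SumWtSq F τ) : SumWtSq F (σ * τ) := by
  rw [sws_iff] at hσ hτ ⊢
  induction hσ using AddSubmonoid.closure_induction with
  | mem p hp =>
    induction hτ using AddSubmonoid.closure_induction with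
    | mem q hq =>
      obtain ⟨t, g, ht, rfl⟩ := hp
      obtain ⟨s, h, hs, rfl⟩ := hq
      refine AddSubmonoid.subset_closure ⟨t*s, g*h, ?_, by rw [map_mul]; ring⟩
      · push_cast; exact mul_nonneg ht hs
    | zero => simpa using AddSubmonoid.zero_mem _
    | add x y _ _ hx hy => rw [mul_add]; exact AddSubmonoid.add_mem _ hx hy
  | zero => simpa using AddSubmonoid.zero_mem _
  | add x y _ _ hx hy => rw [add_mul]; exact AddSubmonoid.add_mem _ hx hy

lemma sws_C {t : F} (ht : 0 ≤ (t:ℝ)) : SumWtSq F (C t) := by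
  simpa using sws_term ht 1

lemma sws_one : SumWtSq F 1 := (sws_iff 1).2 (AddSubmonoid.subset_closure ⟨1, 1, by norm_num, by rw [map_one, one_pow, mul_one]⟩)

lemma sws_sq (g : F[X]) : SumWtSq F (g^2) := by
  simpa using sws_term (t := 1) (by norm_num) g

lemma sws_mul_sq {σ : F[X]} (hσ : SumWtSq F σ) (g : F[X]) : SumWtSq F (σ * g^2) :=
  sws_mul hσ (sws_sq g)

/-- membership in the preordering generated by `d - x²`. -/
def Rep (F : Subfield ℝ) (d : F) (f : F[X]) : Prop :=
  ∃ σ₀ σ₁ : F[X], SumWtSq F σ₀ ∧ SumWtSq F σ₁ ∧ f = σ₀ + σ₁ * (C d - X ^ 2)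

variable {d : F}

lemma rep_of_sws {σ : F[X]} (h : SumWtSq F σ) : Rep F d σ :=
  ⟨σ, 0, h, sws_zero, by ring⟩

lemma rep_zero : Rep F d 0 := rep_of_sws sws_zero

lemma rep_C {t : F} (ht : 0 ≤ (t:ℝ)) : Rep F d (C t) := rep_of_sws (sws_C ht)

lemma rep_D : Rep F d (C d - X ^ 2) := ⟨0, 1, sws_zero, sws_one, by ring⟩

lemma rep_add {f g : F[X]} (hf : Rep F d f) (hg : Rep F d g) : Rep F d (f + g) := by
  obtain ⟨σ₀, σ₁, h0, h1, rfl⟩ := hf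
  obtain ⟨τ₀, τ₁, k0, k1, rfl⟩ := hg
  exact ⟨σ₀ + τ₀, σ₁ + τ₁, sws_add h0 k0, sws_add h1 k1, by ring⟩

lemma rep_mul {f g : F[X]} (hf : Rep F d f) (hg : Rep F d g) : Rep F d (f * g) := by
  obtain ⟨σ₀, σ₁, h0, h1, rfl⟩ := hf
  obtain ⟨τ₀, τ₁, k0, k1, rfl⟩ := hg
  refine ⟨σ₀ * τ₀ + (σ₁ * τ₁) * (C d - X ^ 2)^2, σ₀ * τ₁ + σ₁ * τ₀, ?_, ?_, by ring⟩
  · exact sws_add (sws_mul h0 k0) (sws_mul_sq (sws_mul h1 k1) _)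
  · exact sws_add (sws_mul h0 k1) (sws_mul h1 k0)

lemma rep_pow {f : F[X]} (hf : Rep F d f) (n : ℕ) : Rep F d (f ^ n) := by
  induction n with
  | zero => simpa using rep_of_sws sws_one
  | succ n ih => rw [pow_succ]; exact rep_mul ih hf

lemma rep_sum {α : Type*} (s : Finset α) (f : α → F[X]) (h : ∀ a ∈ s, Rep F d (f a)) :
    Rep F d (∑ a ∈ s, f a) := by
  classical
  induction s using Finset.induction with
  | empty => simpa using rep_zero
  | insert x s hx ih =>
    rw [Finset.sum_insert hx]
    exact rep_add (h _ (Finset.mem_insert_self _ _))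
      (ih fun a ha => h a (Finset.mem_insert_of_mem ha))


lemma algmap_eq (t : F) : (algebraMap ↥F ℝ) t = ↑t := rfl

/-- nonnegative off a finite set on a symmetric interval implies nonnegative. -/
lemma nonneg_extend {s : ℝ} (hs : 0 < s) {h : ℝ → ℝ} (hc : Continuous h) {R : Set ℝ}
    (hR : R.Finite) (H : ∀ x ∈ Set.Icc (-s) s, x ∉ R → 0 ≤ h x) :
    ∀ x ∈ Set.Icc (-s) s, 0 ≤ h x := by
  intro x hx
  by_contra hneg
  push_neg at hneg
  have hU : IsOpen {y : ℝ | h y < 0} := isOpen_lt hc continuous_const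
  obtain ⟨ε, hε, hball⟩ := Metric.isOpen_iff.1 hU x hneg
  set ε' := min (ε/2) s with hε'def
  have hε'pos : 0 < ε' := lt_min (by linarith) hs
  have hball' : ∀ y : ℝ, |y - x| ≤ ε' → h y < 0 := by
    intro y hy
    exact hball (by
      rw [Metric.mem_ball, Real.dist_eq]
      calc |y - x| ≤ ε' := hy
        _ ≤ ε/2 := min_le_left _ _
        _ < ε := by linarith)
  rcases le_or_gt 0 x with hx0 | hx0
  · -- J = Icc (x - ε') x
    have hJinf : (Set.Icc (x - ε') x).Infinite := Set.Icc_infinite (by linarith)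
    obtain ⟨y, hyJ, hyR⟩ := (hJinf.diff hR).nonempty
    have hy1 : y ∈ Set.Icc (-s) s := by
      obtain ⟨h1, h2⟩ := hyJ
      constructor
      · have : -s ≤ x - ε' := by
          have := min_le_right (ε/2) s; simp only [← hε'def] at this
          linarith
        linarith
      · linarith [hx.2]
    have := H y hy1 hyR
    have : h y < 0 := hball' y (by
      obtain ⟨h1, h2⟩ := hyJ
      rw [abs_le]; constructor <;> linarith)
    linarith [H y hy1 hyR]
  · have hJinf : (Set.Icc x (x + ε')).Infinite := Set.Icc_infinite (by linarith)
    obtain ⟨y, hyJ, hyR⟩ := (hJinf.diff hR).nonempty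
    have hy1 : y ∈ Set.Icc (-s) s := by
      obtain ⟨h1, h2⟩ := hyJ
      constructor
      · linarith [hx.1]
      · have : x + ε' ≤ s := by
          have := min_le_right (ε/2) s; simp only [← hε'def] at this
          linarith
        linarith
    have : h y < 0 := hball' y (by
      obtain ⟨h1, h2⟩ := hyJ
      rw [abs_le]; constructor <;> linarith)
    linarith [H y hy1 hyR]

/-- strict positivity on a compact symmetric interval extends to a slightly larger rational one. -/
lemma enlarge {s : ℝ} (hs : 0 < s) {h : ℝ → ℝ} (hc : Continuous h)
    (H : ∀ x ∈ Set.Icc (-s) s, 0 < h x) :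
    ∃ c : ℚ, s < (c:ℝ) ∧ ∀ x ∈ Set.Icc (-(c:ℝ)) (c:ℝ), 0 < h x := by
  classical
  set K : Set ℝ := {x ∈ Set.Icc (-(s+1)) (s+1) | h x ≤ 0} with hK
  have hKc : IsCompact K := by
    apply IsCompact.of_isClosed_subset (isCompact_Icc (a := -(s+1)) (b := s+1))
    · exact (isClosed_Icc).inter (isClosed_le hc continuous_const)
    · intro x hx; exact hx.1
  rcases K.eq_empty_or_nonempty with hKe | hKne
  · obtain ⟨c, hc1, hc2⟩ := exists_rat_btwn (show s < s+1 by linarith)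
    refine ⟨c, hc1, fun x hx => ?_⟩
    by_contra hn
    push_neg at hn
    have : x ∈ K := ⟨⟨by linarith [hx.1], by linarith [hx.2]⟩, hn⟩
    rw [hKe] at this; exact this
  · obtain ⟨x₀, hx₀K, hx₀min⟩ := hKc.exists_isMinOn hKne (continuous_abs.continuousOn)
    have hx₀s : s < |x₀| := by
      by_contra hn
      push_neg at hn
      rw [abs_le] at hn
      exact absurd hx₀K.2 (not_le.2 (H x₀ ⟨hn.1, hn.2⟩))
    obtain ⟨c, hc1, hc2⟩ := exists_rat_btwn hx₀s
    refine ⟨c, hc1, fun x hx => ?_⟩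
    by_contra hn
    push_neg at hn
    have hxs1 : |x| ≤ c := abs_le.2 ⟨by linarith [hx.1], hx.2⟩
    have hx01 : |x₀| ≤ s + 1 := abs_le.2 ⟨by linarith [hx₀K.1.1], hx₀K.1.2⟩
    have habs := abs_le.1 hxs1
    have hxK : x ∈ K := ⟨⟨by linarith, by linarith⟩, hn⟩
    have := hx₀min hxK
    simp only [Set.mem_setOf_eq] at this
    have : |x₀| ≤ |x| := this
    linarith

section Linear

variable {F : Subfield ℝ} {d : F}

lemma rat_mem_coe (q : ℚ) : (((q:F)):ℝ) = (q:ℝ) := by push_cast; ring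

/-- For `c ∈ F` with `√d < c`, both `c + x` and `c - x` are in the preordering. -/
lemma rep_linear (hd : 0 < (d:ℝ)) {c : F} (hc : Real.sqrt (d:ℝ) < (c:ℝ)) :
    Rep F d (C c + X) ∧ Rep F d (C c - X) := by
  have hc0 : 0 < (c:ℝ) := lt_of_le_of_lt (Real.sqrt_nonneg _) hc
  have hcd : (d:ℝ) < (c:ℝ)^2 := by
    have := Real.sq_sqrt (le_of_lt hd)
    nlinarith [Real.sqrt_nonneg (d:ℝ)]
  set e : ℝ := Real.sqrt ((c:ℝ)^2 - (d:ℝ)) with he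
  have he2 : e^2 = (c:ℝ)^2 - (d:ℝ) := Real.sq_sqrt (by linarith)
  have he0 : 0 < e := Real.sqrt_pos.2 (by linarith)
  have hec : e < c := by nlinarith
  have h2d : (0:ℝ) < 2*(d:ℝ) := by linarith
  have hroots : ((c:ℝ) - e)/(2*(d:ℝ)) < ((c:ℝ) + e)/(2*(d:ℝ)) := by
    rw [div_lt_div_iff₀ h2d h2d]; nlinarith
  obtain ⟨q, hq1, hq2⟩ := exists_rat_btwn hroots
  set α : F := (q : F) with hαdef
  have hαq : (α:ℝ) = (q:ℝ) := rat_mem_coe q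
  have h1 : ((c:ℝ) - e) < 2*(d:ℝ)*(α:ℝ) := by
    rw [div_lt_iff₀ h2d] at hq1; rw [hαq]; linarith
  have h2 : 2*(d:ℝ)*(α:ℝ) < ((c:ℝ) + e) := by
    rw [lt_div_iff₀ h2d] at hq2; rw [hαq]; linarith
  have hα0 : 0 < (α:ℝ) := by nlinarith
  have key : 4*(d:ℝ)*(α:ℝ)^2 + 1 < 4*(c:ℝ)*(α:ℝ) := by
    nlinarith [mul_pos (sub_pos.2 h1) (sub_pos.2 h2), hd]
  have hαne : α ≠ 0 := by
    intro h; rw [h] at hα0; simp at hα0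
  set β : F := (2*α)⁻¹ with hβdef
  set δ : F := c - α*d - (4*α)⁻¹ with hδdef
  have hδ0 : 0 ≤ (δ:ℝ) := by
    have hδr : (δ:ℝ) = (c:ℝ) - (α:ℝ)*(d:ℝ) - (4*(α:ℝ))⁻¹ := by
      rw [hδdef]
      push_cast
      try rw [show ((4:F):ℝ) = (4:ℝ) by norm_cast]
      try ring
    rw [hδr, sub_nonneg]
    have h4α : (0:ℝ) < 4*(α:ℝ) := by linarith
    have hinv : (4*(α:ℝ))⁻¹ * (4*(α:ℝ)) = 1 := inv_mul_cancel₀ (ne_of_gt h4α)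
    nlinarith [hinv, key]
  have hkeyF : ∀ r : F, c + r = (α * (r + β)^2 + δ * 1^2) + α * (d - r^2) := by
    intro r
    rw [hβdef, hδdef]
    field_simp
    ring
  have hkeyF' : ∀ r : F, c - r = (α * (r - β)^2 + δ * 1^2) + α * (d - r^2) := by
    intro r
    rw [hβdef, hδdef]
    field_simp
    ring
  constructor
  · refine ⟨C α * (X + C β)^2 + C δ * 1^2, C α,
      sws_add (sws_term (le_of_lt hα0) _) (sws_term hδ0 1), sws_C (le_of_lt hα0), ?_⟩
    apply Polynomial.funext
    intro r
    simp only [eval_add, eval_mul, eval_pow, eval_C, eval_X, eval_sub, eval_one]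
    exact hkeyF r
  · refine ⟨C α * (X - C β)^2 + C δ * 1^2, C α,
      sws_add (sws_term (le_of_lt hα0) _) (sws_term hδ0 1), sws_C (le_of_lt hα0), ?_⟩
    apply Polynomial.funext
    intro r
    simp only [eval_add, eval_mul, eval_pow, eval_C, eval_X, eval_sub, eval_one]
    exact hkeyF' r

end Linear

lemma claimA {K : Type*} [Field K] [CharZero K] :
    ∀ (k i N : ℕ), k ≤ i → i ≤ N →
      (∏ j ∈ range k, ((i:K) - j)) * (N.choose i : K)
        = ((N-k).choose (i-k) : K) * ∏ j ∈ range k, ((N:K) - j) := by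
  intro k
  induction k with
  | zero => intro i N _ _; simp
  | succ k ih =>
    intro i N h1 h2
    have hk_i : k ≤ i := by omega
    have hnat : (N - k) * ((N-(k+1)).choose (i-(k+1))) = ((N-k).choose (i-k)) * (i - k) := by
      obtain ⟨m, hm⟩ : ∃ m, i - k = m + 1 := ⟨i - (k+1), by omega⟩
      obtain ⟨M, hM⟩ : ∃ M, N - k = M + 1 := ⟨N - (k+1), by omega⟩
      have h3 : N - (k+1) = M := by omega
      have h4 : i - (k+1) = m := by omega
      rw [hm, hM, h3, h4]
      have := Nat.add_one_mul_choose_eq M m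
      omega
    have hci : ((i:K) - k) = ((i - k : ℕ) : K) := by
      rw [Nat.cast_sub hk_i]
    have hcN : ((N:K) - k) = ((N - k : ℕ) : K) := by
      rw [Nat.cast_sub (by omega)]
    rw [prod_range_succ, prod_range_succ]
    rw [mul_right_comm, ih i N hk_i h2, hci, hcN]
    have hcast : ((N - k : ℕ):K) * (((N-(k+1)).choose (i-(k+1)) : ℕ) : K)
        = (((N-k).choose (i-k) : ℕ) : K) * ((i-k:ℕ):K) := by
      exact_mod_cast congrArg (Nat.cast : ℕ → K) hnat
    linear_combination (-(∏ j ∈ range k, ((N:K) - (j:K)))) * hcast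

lemma claimC {K : Type*} [Field K] (k i N : ℕ) (h : i < k) :
    (∏ j ∈ range k, (((i:K) - j)/((N:K) - j))) = 0 := by
  apply Finset.prod_eq_zero (Finset.mem_range.2 h)
  simp

lemma claimB {K : Type*} [Field K] [CharZero K] (k i N : ℕ) (hk : k ≤ i) (hiN : i ≤ N)
    (hkN : k ≤ N) :
    (∏ j ∈ range k, (((i:K) - j)/((N:K) - j))) * (N.choose i : K)
      = ((N-k).choose (i-k) : K) := by
  have hden : ∀ j ∈ range k, ((N:K) - j) ≠ 0 := by
    intro j hj
    rw [Finset.mem_range] at hj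
    have hjN : j < N := lt_of_lt_of_le hj hkN
    have h1 : ((N:K) - j) = ((N - j : ℕ) : K) := by rw [Nat.cast_sub (le_of_lt hjN)]
    rw [h1]
    exact Nat.cast_ne_zero.2 (Nat.sub_ne_zero_of_lt hjN)
  have hdprod : (∏ j ∈ range k, ((N:K) - j)) ≠ 0 := Finset.prod_ne_zero_iff.2 hden
  rw [Finset.prod_div_distrib, div_mul_eq_mul_div, claimA k i N hk hiN,
    mul_div_assoc, div_self hdprod, mul_one]

/-- uniform bound for Bernstein products. -/
lemma prodBound (n N i : ℕ) (hN : 2*n < N) (hi : i ≤ N) :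
    ∀ k, k ≤ n →
      |∏ j ∈ range k, (((i:ℝ) - j)/((N:ℝ) - j))| ≤ 1 ∧
      |(∏ j ∈ range k, (((i:ℝ) - j)/((N:ℝ) - j))) - ((i:ℝ)/N)^k|
        ≤ k * n / ((N:ℝ) - n) := by
  have hN0 : (0:ℝ) < N := by
    have : 0 < N := by omega
    exact_mod_cast this
  have hNn : (0:ℝ) < (N:ℝ) - n := by
    have : (n:ℝ) < N := by exact_mod_cast Nat.lt_of_le_of_lt (Nat.le_mul_of_pos_left n (by norm_num)) hN
    linarith
  have hs0 : (0:ℝ) ≤ (i:ℝ)/N := by positivity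
  have hs1 : (i:ℝ)/N ≤ 1 := by
    rw [div_le_one hN0]
    exact_mod_cast hi
  intro k hk
  induction k with
  | zero => simp
  | succ k ihk =>
    have hk' : k ≤ n := by omega
    obtain ⟨ihT, ihD⟩ := ihk hk'
    have hNk : (0:ℝ) < (N:ℝ) - k := by
      have : (k:ℝ) ≤ n := by exact_mod_cast hk'
      linarith
    set a : ℝ := ((i:ℝ) - k)/((N:ℝ) - k) with ha
    set s : ℝ := (i:ℝ)/N with hsdef
    have hiR : (0:ℝ) ≤ i := Nat.cast_nonneg i
    have hiN : (i:ℝ) ≤ N := by exact_mod_cast hi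
    have hkR : (0:ℝ) ≤ k := Nat.cast_nonneg k
    have h2k : (k:ℝ) + k < N := by
      have h1 : (k:ℝ) ≤ n := by exact_mod_cast hk'
      have h2 : 2*(n:ℝ) < N := by exact_mod_cast hN
      linarith
    have haabs : |a| ≤ 1 := by
      rw [ha, abs_div, abs_of_pos hNk, div_le_one hNk, abs_le]
      constructor <;> linarith
    have hadiff : |a - s| ≤ (n:ℝ) / ((N:ℝ) - n) := by
      have heq : a - s = ((k:ℝ)*((i:ℝ)-N))/((N:ℝ)*((N:ℝ)-k)) := by
        rw [ha, hsdef]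
        field_simp
        ring
      rw [heq, abs_div, abs_mul, abs_of_pos (mul_pos hN0 hNk) ]
      rw [abs_of_nonneg hkR, abs_of_nonpos (by linarith), div_le_div_iff₀ (mul_pos hN0 hNk) hNn]
      have h1 : (k:ℝ) ≤ n := by exact_mod_cast hk'
      have e1 : (0:ℝ) ≤ (N:ℝ) - i := by linarith
      have e2 : (k:ℝ)*((N:ℝ)-i) ≤ (n:ℝ)*(N:ℝ) := by nlinarith
      have e3 : (N:ℝ)-(n:ℝ) ≤ (N:ℝ)-(k:ℝ) := by linarith
      nlinarith [mul_le_mul_of_nonneg_right e2 hNn.le,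
        mul_le_mul_of_nonneg_left e3 (mul_nonneg (Nat.cast_nonneg n) hN0.le)]
    rw [prod_range_succ, pow_succ]
    constructor
    · rw [abs_mul]
      calc |∏ j ∈ range k, ((i:ℝ) - j)/((N:ℝ) - j)| * |a| ≤ 1 * 1 :=
          mul_le_mul ihT haabs (abs_nonneg _) zero_le_one
        _ = 1 := by norm_num
    · have hdec : (∏ j ∈ range k, ((i:ℝ) - j)/((N:ℝ) - j)) * a - s^k * s
          = (∏ j ∈ range k, ((i:ℝ) - j)/((N:ℝ) - j)) * (a - s)
            + s * ((∏ j ∈ range k, ((i:ℝ) - j)/((N:ℝ) - j)) - s^k) := by ring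
      rw [hdec]
      have hsabs : |s| ≤ 1 := by rw [abs_of_nonneg hs0]; exact hs1
      calc |_ + _| ≤ |(∏ j ∈ range k, ((i:ℝ) - j)/((N:ℝ) - j)) * (a - s)|
            + |s * ((∏ j ∈ range k, ((i:ℝ) - j)/((N:ℝ) - j)) - s^k)| := abs_add_le _ _
        _ ≤ 1 * ((n:ℝ)/((N:ℝ)-n)) + 1 * ((k:ℝ) * n / ((N:ℝ) - n)) := by
            rw [abs_mul, abs_mul]
            gcongr
        _ ≤ (↑(k+1)) * n / ((N:ℝ) - n) := by
            push_cast
            rw [one_mul, one_mul, ← add_div]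
            apply le_of_eq
            congr 1
            ring


set_option maxHeartbeats 2000000 in
set_option synthInstance.maxHeartbeats 400000 in
open Polynomial in
lemma bernstein {F : Subfield ℝ} (q : F[X]) (b : F) (hb : 0 < (b:ℝ))
    (hq : ∀ u : ℝ, 0 ≤ u → u ≤ (b:ℝ) → 0 < Polynomial.aeval u q) :
    ∃ (N : ℕ) (lam : ℕ → F), (∀ i, 0 ≤ ((lam i : ℝ))) ∧
      q = ∑ i ∈ range (N+1), C (lam i) * X^i * (C b - X)^(N-i) := by
  classical
  set n := q.natDegree with hn
  have hbF : b ≠ 0 := by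
    intro h
    rw [h] at hb
    simp at hb
  obtain ⟨u₀, hu₀, hmin⟩ := (isCompact_Icc (a := (0:ℝ)) (b := (b:ℝ))).exists_isMinOn
    ⟨0, le_refl 0, hb.le⟩ ((Polynomial.continuous_aeval q).continuousOn)
  set δ : ℝ := Polynomial.aeval u₀ q with hδ
  have hδ0 : 0 < δ := hq u₀ hu₀.1 hu₀.2
  have hminle : ∀ u ∈ Set.Icc (0:ℝ) (b:ℝ), δ ≤ Polynomial.aeval u q := fun u hu => hmin hu
  set A : ℝ := ∑ k ∈ range (n+1), |(q.coeff k : ℝ)| * (b:ℝ)^k with hA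
  have hA0 : 0 ≤ A := Finset.sum_nonneg fun k _ => mul_nonneg (abs_nonneg _) (pow_nonneg hb.le _)
  set N : ℕ := 2*n + 1 + ⌈A * n^2 / δ⌉₊ with hNdef
  have h2n : 2*n < N := by omega
  have hnN : n < N := by omega
  have hNn : (0:ℝ) < (N:ℝ) - n := by
    have : (n:ℝ) < (N:ℝ) := by exact_mod_cast hnN
    linarith
  have hbound : A * n^2 / ((N:ℝ) - n) < δ := by
    rw [div_lt_iff₀ hNn]
    have h1 : A * n^2 / δ ≤ (⌈A * n^2 / δ⌉₊ : ℝ) := Nat.le_ceil _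
    have h2 : A * n^2 ≤ (⌈A * n^2 / δ⌉₊:ℝ) * δ := (div_le_iff₀ hδ0).1 h1
    have h3 : (N:ℝ) - n = (n:ℝ) + 1 + ⌈A * n^2 / δ⌉₊ := by
      rw [hNdef]
      push_cast
      ring
    nlinarith
  set T : ℕ → ℕ → F := fun k i => ∏ j ∈ range k, (((i:F) - j)/((N:F) - j)) with hT
  set lam : ℕ → F := fun i =>
    (∑ k ∈ range (n+1), q.coeff k * b^k * T k i) * (N.choose i : F) / b^N with hlam
  have hTcoe : ∀ k i, ((T k i : F):ℝ) = ∏ j ∈ range k, (((i:ℝ) - j)/((N:ℝ) - j)) := by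
    intro k i
    rw [hT]
    simp only []
    rw [show ((↑(∏ j ∈ range k, (((i:F) - j)/((N:F) - j))) : ℝ))
        = F.subtype (∏ j ∈ range k, (((i:F) - j)/((N:F) - j))) from rfl, map_prod]
    apply Finset.prod_congr rfl
    intro j _
    rw [map_div₀, map_sub, map_sub, map_natCast, map_natCast]
    rfl
  have hlamcoe : ∀ i, ((lam i):ℝ)
      = (∑ k ∈ range (n+1), (q.coeff k:ℝ) * (b:ℝ)^k * ((T k i : F):ℝ)) * (N.choose i : ℝ) / (b:ℝ)^N := by
    intro i
    have hsum : F.subtype (∑ k ∈ range (n+1), q.coeff k * b^k * T k i)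
        = ∑ k ∈ range (n+1), (q.coeff k:ℝ) * (b:ℝ)^k * ((T k i : F):ℝ) := by
      rw [map_sum]
      apply Finset.sum_congr rfl
      intro k _
      rw [map_mul, map_mul, map_pow]
      rfl
    rw [show ((lam i : ℝ)) = F.subtype (lam i) from rfl, hlam]
    simp only []
    rw [map_div₀, map_mul, map_pow, map_natCast, hsum]
    rfl
  have hpos : ∀ i, 0 ≤ ((lam i : ℝ)) := by
    intro i
    by_cases hiN : i ≤ N
    · -- main estimate
      set s : ℝ := (i:ℝ)/N with hs
      have hN0 : (0:ℝ) < N := by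
        have : 0 < N := by omega
        exact_mod_cast this
      have hs0 : 0 ≤ s := by positivity
      have hs1 : s ≤ 1 := by
        rw [hs, div_le_one hN0]
        exact_mod_cast hiN
      set u : ℝ := (b:ℝ) * s with hu
      have hu0 : 0 ≤ u := mul_nonneg hb.le hs0
      have hub : u ≤ (b:ℝ) := by
        rw [hu]
        nlinarith
      have hev : Polynomial.aeval u q = ∑ k ∈ range (n+1), (q.coeff k:ℝ) * ((b:ℝ)^k * s^k) := by
        rw [Polynomial.aeval_eq_sum_range' (show q.natDegree < n+1 by omega)]
        apply Finset.sum_congr rfl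
        intro k _
        rw [Algebra.smul_def, hu, mul_pow]
        rfl
      set v : ℝ := ∑ k ∈ range (n+1), (q.coeff k:ℝ) * (b:ℝ)^k * ((T k i : F):ℝ) with hv
      have hdiff : |v - Polynomial.aeval u q| ≤ A * n^2 / ((N:ℝ) - n) := by
        rw [hev, hv, ← Finset.sum_sub_distrib]
        calc |∑ k ∈ range (n+1), ((q.coeff k:ℝ) * (b:ℝ)^k * ((T k i : F):ℝ)
              - (q.coeff k:ℝ) * ((b:ℝ)^k * s^k))|
            ≤ ∑ k ∈ range (n+1), |(q.coeff k:ℝ) * (b:ℝ)^k * ((T k i : F):ℝ)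
              - (q.coeff k:ℝ) * ((b:ℝ)^k * s^k)| := Finset.abs_sum_le_sum_abs _ _
          _ ≤ ∑ k ∈ range (n+1), |(q.coeff k:ℝ)| * (b:ℝ)^k * ((n:ℝ) * n / ((N:ℝ) - n)) := by
              apply Finset.sum_le_sum
              intro k hk
              have hkn : k ≤ n := by
                rw [Finset.mem_range] at hk
                omega
              have hfact : (q.coeff k:ℝ) * (b:ℝ)^k * ((T k i : F):ℝ)
                  - (q.coeff k:ℝ) * ((b:ℝ)^k * s^k)
                  = (q.coeff k:ℝ) * (b:ℝ)^k * (((T k i : F):ℝ) - s^k) := by ring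
              rw [hfact, abs_mul, abs_mul, abs_of_nonneg (pow_nonneg hb.le k)]
              obtain ⟨hP1, hP2⟩ := prodBound n N i h2n hiN k hkn
              rw [hTcoe]
              have hP3 : (k:ℝ)*n/((N:ℝ)-n) ≤ (n:ℝ)*n/((N:ℝ)-n) := by
                have hkn' : (k:ℝ) ≤ (n:ℝ) := by exact_mod_cast hkn
                gcongr
              exact mul_le_mul_of_nonneg_left (hP2.trans hP3)
                (mul_nonneg (abs_nonneg _) (pow_nonneg hb.le k))
          _ = A * ((n:ℝ) * n / ((N:ℝ) - n)) := by rw [hA, Finset.sum_mul]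
          _ = A * n^2 / ((N:ℝ) - n) := by ring
      have hvpos : 0 < v := by
        have h1 : δ ≤ Polynomial.aeval u q := hminle u ⟨hu0, hub⟩
        have h2 := abs_le.1 hdiff
        linarith [h2.1, hbound]
      rw [hlamcoe]
      apply div_nonneg (mul_nonneg hvpos.le (Nat.cast_nonneg _)) (pow_nonneg hb.le _)
    · -- choose N i = 0
      rw [hlamcoe]
      rw [Nat.choose_eq_zero_of_lt (by omega)]
      simp
  refine ⟨N, lam, hpos, ?_⟩
  have hsummand : ∀ i ∈ range (N+1), C (lam i) * X^i * (C b - X)^(N-i)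
      = ∑ k ∈ range (n+1),
          C (q.coeff k * b^k / b^N) * (C (T k i * (N.choose i : F)) * X^i * (C b - X)^(N-i)) := by
    intro i _
    have hlami : lam i = ∑ k ∈ range (n+1),
        (q.coeff k * b^k / b^N) * (T k i * (N.choose i : F)) := by
      rw [hlam]
      simp only []
      rw [Finset.sum_mul, Finset.sum_div]
      apply Finset.sum_congr rfl
      intro k _
      ring
    rw [hlami, map_sum, Finset.sum_mul, Finset.sum_mul]
    apply Finset.sum_congr rfl
    intro k _
    rw [map_mul]
    ring
  rw [Finset.sum_congr rfl hsummand, Finset.sum_comm]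
  have hinner : ∀ k ∈ range (n+1),
      (∑ i ∈ range (N+1),
        C (q.coeff k * b^k / b^N) * (C (T k i * (N.choose i:F)) * X^i * (C b - X)^(N-i)))
      = C (q.coeff k) * X^k := by
    intro k hk
    have hkN : k ≤ N := by
      rw [Finset.mem_range] at hk
      omega
    rw [range_eq_Ico, ← Finset.sum_Ico_consecutive _ (Nat.zero_le k) (by omega : k ≤ N+1)]
    have hzero : (∑ i ∈ Finset.Ico 0 k,
        C (q.coeff k * b^k / b^N) * (C (T k i * (N.choose i:F)) * X^i * (C b - X)^(N-i))) = 0 := by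
      apply Finset.sum_eq_zero
      intro i hi
      rw [Finset.mem_Ico] at hi
      rw [hT]
      simp only []
      rw [claimC k i N hi.2]
      simp
    rw [hzero, zero_add, Finset.sum_Ico_eq_sum_range]
    have hNk1 : N + 1 - k = (N - k) + 1 := by omega
    rw [hNk1]
    have hterm : ∀ m ∈ range ((N-k)+1),
        C (q.coeff k * b^k / b^N) * (C (T k (k+m) * (N.choose (k+m):F)) * X^(k+m) * (C b - X)^(N-(k+m)))
        = (C (q.coeff k * b^k / b^N) * X^k)
            * (X^m * (C b - X)^((N-k)-m) * (((N-k).choose m : ℕ) : F[X])) := by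
      intro m hm
      rw [Finset.mem_range] at hm
      have hkm : k + m ≤ N := by omega
      have h1 : T k (k+m) * (N.choose (k+m):F) = ((N-k).choose ((k+m)-k) : F) := by
        rw [hT]
        simp only []
        exact claimB k (k+m) N (by omega) hkm hkN
      rw [h1, Nat.add_sub_cancel_left]
      have h2 : N - (k+m) = (N-k) - m := by omega
      rw [h2, pow_add, Polynomial.C_eq_natCast]
      ring
    rw [Finset.sum_congr rfl hterm, ← Finset.mul_sum]
    have haddpow : (∑ m ∈ range ((N-k)+1),
        X^m * (C b - X)^((N-k)-m) * (((N-k).choose m : ℕ) : F[X])) = C (b^(N-k)) := by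
      have h3 := add_pow (X : F[X]) (C b - X) (N-k)
      rw [add_sub_cancel] at h3
      rw [← h3, ← Polynomial.C_pow]
    rw [haddpow, mul_assoc, mul_comm (X^k : F[X]), ← mul_assoc, ← map_mul]
    congr 2
    field_simp
    rw [mul_assoc, ← pow_add]
    congr 2
    omega
  rw [Finset.sum_congr rfl hinner]
  conv_lhs => rw [Polynomial.as_sum_range' q (n+1) (by omega)]
  apply Finset.sum_congr rfl
  intro k _
  rw [Polynomial.C_mul_X_pow_eq_monomial]

section Pos

open Polynomial Finset

variable {F : Subfield ℝ} {d : F}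

lemma rep_of_pos (hd : 0 < (d:ℝ)) {f : F[X]}
    (hf : ∀ x : ℝ, -Real.sqrt (d:ℝ) ≤ x → x ≤ Real.sqrt (d:ℝ) → 0 < Polynomial.aeval x f) :
    Rep F d f := by
  have hs : (0:ℝ) < Real.sqrt (d:ℝ) := Real.sqrt_pos.2 hd
  obtain ⟨c, hc1, hc2⟩ := enlarge hs (Polynomial.continuous_aeval f)
    (fun x hx => hf x hx.1 hx.2)
  set cF : F := (c : F) with hcF
  have hcFr : (cF:ℝ) = (c:ℝ) := rat_mem_coe c
  have hcs : Real.sqrt (d:ℝ) < (cF:ℝ) := by rw [hcFr]; exact hc1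
  have hc0 : 0 < (cF:ℝ) := lt_of_le_of_lt (Real.sqrt_nonneg _) hcs
  set b : F := cF + cF with hb
  have hbr : (b:ℝ) = (cF:ℝ) + (cF:ℝ) := rfl
  have hb0 : 0 < (b:ℝ) := by rw [hbr]; linarith
  set q : F[X] := f.comp (X - C cF) with hq
  have hqpos : ∀ u : ℝ, 0 ≤ u → u ≤ (b:ℝ) → 0 < Polynomial.aeval u q := by
    intro u hu1 hu2
    rw [hq, Polynomial.aeval_comp]
    have : Polynomial.aeval u (X - C cF : F[X]) = u - (cF:ℝ) := by
      rw [map_sub, Polynomial.aeval_X, Polynomial.aeval_C]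
      rfl
    rw [this]
    apply hc2
    rw [hbr] at hu2
    constructor
    · rw [← hcFr]; linarith
    · rw [← hcFr]; linarith
  obtain ⟨N, lam, hlam0, hrep⟩ := bernstein q b hb0 hqpos
  have hfq : f = q.comp (X + C cF) := by
    rw [hq, Polynomial.comp_assoc]
    simp [Polynomial.sub_comp, Polynomial.X_comp, Polynomial.C_comp]
  rw [hfq, hrep]
  rw [Polynomial.sum_comp]
  apply rep_sum
  intro i _
  rw [Polynomial.mul_comp, Polynomial.mul_comp, Polynomial.pow_comp, Polynomial.pow_comp,
    Polynomial.C_comp, Polynomial.sub_comp, Polynomial.C_comp, Polynomial.X_comp]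
  have hCb : (C b - (X + C cF) : F[X]) = C cF - X := by
    rw [hb, Polynomial.C_add]
    ring
  rw [hCb]
  have hlin := rep_linear (d := d) hd hcs
  apply rep_mul (rep_mul (rep_C (hlam0 i)) ?_) ?_
  · have : (X + C cF : F[X]) = C cF + X := by ring
    rw [this]
    exact rep_pow hlin.1 i
  · exact rep_pow hlin.2 (N - i)

end Pos

section Roots

open Polynomial

variable {F : Subfield ℝ} {d : F}

lemma endpoint_dvd (hd : 0 < (d:ℝ)) (hirr : Real.sqrt (d:ℝ) ∉ F)
    {f : F[X]} (hne : f ≠ 0) {x₀ : ℝ}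
    (hx : x₀ = Real.sqrt (d:ℝ) ∨ x₀ = -Real.sqrt (d:ℝ))
    (hroot : Polynomial.aeval x₀ f = 0) : (X^2 - C d) ∣ f := by
  have hint : IsIntegral F x₀ := IsAlgebraic.isIntegral ⟨f, hne, hroot⟩
  set m : F[X] := minpoly F x₀ with hm
  have hdvd_f : m ∣ f := minpoly.dvd F x₀ hroot
  have hx2 : x₀^2 = (d:ℝ) := by
    rcases hx with h | h
    · rw [h, Real.sq_sqrt hd.le]
    · rw [h, neg_sq, Real.sq_sqrt hd.le]
  have hdvd_p : m ∣ (X^2 - C d) := by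
    apply minpoly.dvd
    rw [map_sub, map_pow, Polynomial.aeval_X, Polynomial.aeval_C]
    rw [show ((algebraMap ↥F ℝ) d) = (d:ℝ) from rfl, hx2]
    ring
  have hmonic : m.Monic := minpoly.monic hint
  have hpne : (X^2 - C d : F[X]) ≠ 0 := by
    intro h
    have := Polynomial.natDegree_X_pow_sub_C (n := 2) (r := d)
    rw [h] at this
    simp at this
  have hdeg2 : (X^2 - C d : F[X]).natDegree = 2 := Polynomial.natDegree_X_pow_sub_C
  have hdegm : m.natDegree ≤ 2 := by
    have := Polynomial.natDegree_le_of_dvd hdvd_p hpne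
    omega
  have hdegm1 : 0 < m.natDegree := minpoly.natDegree_pos hint
  have hdegm_ne1 : m.natDegree ≠ 1 := by
    intro h1
    have hXC := hmonic.eq_X_add_C h1
    have : x₀ + ((m.coeff 0 : F) : ℝ) = 0 := by
      have := minpoly.aeval F x₀
      rw [← hm, hXC] at this
      rw [map_add, Polynomial.aeval_X, Polynomial.aeval_C] at this
      exact this
    have hsqF : Real.sqrt (d:ℝ) ∈ F := by
      rcases hx with h | h
      · have : Real.sqrt (d:ℝ) = ((-(m.coeff 0) : F) : ℝ) := by
          push_cast
          rw [← h]
          linarith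
        rw [this]
        exact (-(m.coeff 0) : F).2
      · have heq : Real.sqrt (d:ℝ) = ((m.coeff 0 : F) : ℝ) := by
          rw [h] at this
          linarith
        rw [heq]
        exact (m.coeff 0 : F).2
    exact hirr hsqF
  have hdegm2 : m.natDegree = 2 := by omega
  obtain ⟨u, hu⟩ := hdvd_p
  have hune : u ≠ 0 := by
    intro h
    rw [h, mul_zero] at hu
    exact hpne hu
  have hmne : m ≠ 0 := hmonic.ne_zero
  have hdegu : u.natDegree = 0 := by
    have := Polynomial.natDegree_mul hmne hune
    rw [← hu, hdeg2, hdegm2] at this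
    omega
  have huC : u = C (u.coeff 0) := Polynomial.eq_C_of_natDegree_eq_zero hdegu
  have hlc : u.coeff 0 = 1 := by
    have h1 : (X^2 - C d : F[X]).leadingCoeff = 1 := by
      have : (X^2 - C d : F[X]).Monic := Polynomial.monic_X_pow_sub_C d (by norm_num)
      exact this
    rw [hu, Polynomial.leadingCoeff_mul, hmonic.leadingCoeff, one_mul] at h1
    rw [huC] at h1
    simpa using h1
  rw [hu, huC, hlc, map_one, mul_one]
  exact hdvd_f

lemma sign_near {a b : ℝ} (h : |a - b| < |b|) : 0 < a * b := by
  rcases lt_trichotomy b 0 with hb | hb | hb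
  · have h2 := abs_lt.1 h
    rw [abs_of_neg hb] at h2
    nlinarith [h2.1, h2.2]
  · rw [hb] at h
    simp at h
    linarith [abs_nonneg a]
  · have h2 := abs_lt.1 h
    rw [abs_of_pos hb] at h2
    nlinarith [h2.1, h2.2]

lemma interior_dvd (hd : 0 < (d:ℝ)) {f : F[X]} (hne : f ≠ 0)
    (hf : ∀ x : ℝ, -Real.sqrt (d:ℝ) ≤ x → x ≤ Real.sqrt (d:ℝ) → 0 ≤ Polynomial.aeval x f)
    {x₀ : ℝ} (hx₀l : -Real.sqrt (d:ℝ) < x₀) (hx₀r : x₀ < Real.sqrt (d:ℝ))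
    (hroot : Polynomial.aeval x₀ f = 0) :
    (minpoly F x₀)^2 ∣ f := by
  have hint : IsIntegral F x₀ := IsAlgebraic.isIntegral ⟨f, hne, hroot⟩
  set m : F[X] := minpoly F x₀ with hm
  obtain ⟨g, hg⟩ : m ∣ f := minpoly.dvd F x₀ hroot
  suffices hmg : m ∣ g by
    obtain ⟨h2, hh⟩ := hmg
    exact ⟨h2, by rw [hg, hh]; ring⟩
  by_contra hmg
  have hgx₀ : Polynomial.aeval x₀ g ≠ 0 := fun h => hmg (minpoly.dvd F x₀ h)
  set mr : ℝ[X] := m.map (algebraMap F ℝ) with hmr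
  have hev_m : ∀ x : ℝ, Polynomial.aeval x m = mr.eval x := fun x => by
    rw [hmr, Polynomial.aeval_def, Polynomial.eval₂_eq_eval_map]
  have hsep : mr.Separable := ((minpoly.irreducible hint).separable).map
  have hmx₀ : mr.eval x₀ = 0 := by rw [← hev_m]; exact minpoly.aeval F x₀
  have hm' : mr.derivative.eval x₀ ≠ 0 := by
    obtain ⟨a, b, hab⟩ := hsep
    intro h0
    have h3 := congrArg (Polynomial.eval x₀) hab
    simp only [Polynomial.eval_add, Polynomial.eval_mul, hmx₀, h0, mul_zero, add_zero,
      Polynomial.eval_one] at h3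
    exact one_ne_zero h3.symm
  set L : ℝ := mr.derivative.eval x₀ with hL
  have hda : HasDerivAt (fun x => mr.eval x) L x₀ := Polynomial.hasDerivAt mr x₀
  have hslope : Filter.Tendsto (slope (fun x => mr.eval x) x₀) (nhdsWithin x₀ {x₀}ᶜ) (nhds L) :=
    hasDerivAt_iff_tendsto_slope.1 hda
  set γ : ℝ → ℝ := fun x => Polynomial.aeval x g with hγ
  have hγcont : Continuous γ := Polynomial.continuous_aeval g
  have hfval : ∀ x : ℝ, Polynomial.aeval x f = mr.eval x * γ x := by
    intro x
    rw [hg, map_mul, hev_m]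
  -- find a point where f is negative
  suffices hexists : ∃ x : ℝ, (-Real.sqrt (d:ℝ) ≤ x ∧ x ≤ Real.sqrt (d:ℝ)) ∧
      Polynomial.aeval x f < 0 by
    obtain ⟨x, ⟨h1, h2⟩, h3⟩ := hexists
    linarith [hf x h1 h2]
  rcases (Ne.lt_or_gt (mul_ne_zero hm' hgx₀)) with hLG | hLG
  · -- L * γ x₀ < 0 : take x just right of x₀
    set lf := nhdsWithin x₀ (Set.Ioi x₀) with hlf
    have hmono : lf ≤ nhdsWithin x₀ {x₀}ᶜ := nhdsWithin_mono x₀ (fun y hy => ne_of_gt hy)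
    have e1 : ∀ᶠ x in lf, |slope (fun x => mr.eval x) x₀ x - L| < |L| :=
      (hslope.mono_left hmono).eventually (eventually_abs_sub_lt L (abs_pos.2 hm'))
    have e2 : ∀ᶠ x in lf, |γ x - γ x₀| < |γ x₀| :=
      ((hγcont.tendsto x₀).mono_left nhdsWithin_le_nhds).eventually
        (eventually_abs_sub_lt _ (abs_pos.2 hgx₀))
    have e3 : ∀ᶠ x in lf, x ∈ Set.Ioo x₀ (Real.sqrt (d:ℝ)) :=
      Ioo_mem_nhdsGT hx₀r
    obtain ⟨x, hx1, hx2, hx3⟩ := (e1.and (e2.and e3)).exists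
    have hxne : x - x₀ ≠ 0 := sub_ne_zero.2 (ne_of_gt hx3.1)
    have hmrx : mr.eval x = slope (fun x => mr.eval x) x₀ x * (x - x₀) := by
      rw [slope_def_field, hmx₀, sub_zero, div_mul_cancel₀ _ hxne]
    have hsl : 0 < slope (fun x => mr.eval x) x₀ x * L := sign_near hx1
    have hγs : 0 < γ x * γ x₀ := sign_near hx2
    have hsg : slope (fun x => mr.eval x) x₀ x * γ x < 0 := by
      nlinarith [mul_pos hsl hγs]
    refine ⟨x, ⟨by linarith [hx3.1], hx3.2.le⟩, ?_⟩
    rw [hfval, hmrx]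
    have : slope (fun x => mr.eval x) x₀ x * (x - x₀) * γ x
        = (slope (fun x => mr.eval x) x₀ x * γ x) * (x - x₀) := by ring
    rw [this]
    exact mul_neg_of_neg_of_pos hsg (by linarith [hx3.1])
  · -- 0 < L * γ x₀ : take x just left of x₀
    set lf := nhdsWithin x₀ (Set.Iio x₀) with hlf
    have hmono : lf ≤ nhdsWithin x₀ {x₀}ᶜ := nhdsWithin_mono x₀ (fun y hy => ne_of_lt hy)
    have e1 : ∀ᶠ x in lf, |slope (fun x => mr.eval x) x₀ x - L| < |L| :=
      (hslope.mono_left hmono).eventually (eventually_abs_sub_lt L (abs_pos.2 hm'))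
    have e2 : ∀ᶠ x in lf, |γ x - γ x₀| < |γ x₀| :=
      ((hγcont.tendsto x₀).mono_left nhdsWithin_le_nhds).eventually
        (eventually_abs_sub_lt _ (abs_pos.2 hgx₀))
    have e3 : ∀ᶠ x in lf, x ∈ Set.Ioo (-Real.sqrt (d:ℝ)) x₀ :=
      Ioo_mem_nhdsLT hx₀l
    obtain ⟨x, hx1, hx2, hx3⟩ := (e1.and (e2.and e3)).exists
    have hxne : x - x₀ ≠ 0 := sub_ne_zero.2 (ne_of_lt hx3.2)
    have hmrx : mr.eval x = slope (fun x => mr.eval x) x₀ x * (x - x₀) := by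
      rw [slope_def_field, hmx₀, sub_zero, div_mul_cancel₀ _ hxne]
    have hsl : 0 < slope (fun x => mr.eval x) x₀ x * L := sign_near hx1
    have hγs : 0 < γ x * γ x₀ := sign_near hx2
    have hsg : 0 < slope (fun x => mr.eval x) x₀ x * γ x := by
      nlinarith [mul_pos hsl hγs]
    refine ⟨x, ⟨hx3.1.le, by linarith [hx3.2]⟩, ?_⟩
    rw [hfval, hmrx]
    have : slope (fun x => mr.eval x) x₀ x * (x - x₀) * γ x
        = (slope (fun x => mr.eval x) x₀ x * γ x) * (x - x₀) := by ring
    rw [this]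
    exact mul_neg_of_pos_of_neg hsg (by linarith [hx3.2])

end Roots

section Main

open Polynomial

variable {F : Subfield ℝ}

lemma main_ind (d : F) (hd : 0 < (d:ℝ)) (hirr : Real.sqrt (d:ℝ) ∉ F) :
    ∀ n : ℕ, ∀ f : F[X], f.natDegree ≤ n →
      (∀ x : ℝ, -Real.sqrt (d:ℝ) ≤ x → x ≤ Real.sqrt (d:ℝ) → 0 ≤ Polynomial.aeval x f) →
      Rep F d f := by
  intro n
  induction n using Nat.strong_induction_on with
  | _ n ih =>
    intro f hdeg hf
    by_cases hf0 : f = 0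
    · rw [hf0]; exact rep_zero
    by_cases hpos : ∀ x : ℝ, -Real.sqrt (d:ℝ) ≤ x → x ≤ Real.sqrt (d:ℝ) →
        0 < Polynomial.aeval x f
    · exact rep_of_pos hd hpos
    push_neg at hpos
    obtain ⟨x₀, h1, h2, h3⟩ := hpos
    have hroot : Polynomial.aeval x₀ f = 0 := le_antisymm h3 (hf x₀ h1 h2)
    have hs : 0 < Real.sqrt (d:ℝ) := Real.sqrt_pos.2 hd
    have hpne : (X^2 - C d : F[X]) ≠ 0 := by
      intro h
      have h5 := Polynomial.natDegree_X_pow_sub_C (n := 2) (r := d)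
      rw [h] at h5
      simp at h5
    by_cases hend : x₀ = Real.sqrt (d:ℝ) ∨ x₀ = -Real.sqrt (d:ℝ)
    · obtain ⟨g, hg⟩ := endpoint_dvd hd hirr hf0 hend hroot
      have hgne : g ≠ 0 := by
        rintro rfl
        rw [mul_zero] at hg
        exact hf0 hg
      have hdegf : f.natDegree = 2 + g.natDegree := by
        rw [hg, Polynomial.natDegree_mul hpne hgne, Polynomial.natDegree_X_pow_sub_C]
      have hdeg_g : g.natDegree < n := by omega
      have hngnn : ∀ x : ℝ, -Real.sqrt (d:ℝ) ≤ x → x ≤ Real.sqrt (d:ℝ) →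
          0 ≤ Polynomial.aeval x (-g) := by
        intro x hx1 hx2
        refine nonneg_extend hs (Polynomial.continuous_aeval (-g))
          ((Set.finite_singleton (Real.sqrt (d:ℝ))).insert (-Real.sqrt (d:ℝ)))
          ?_ x ⟨hx1, hx2⟩
        intro y hy hyR
        simp only [Set.mem_insert_iff, Set.mem_singleton_iff] at hyR
        push_neg at hyR
        have hyabs : |y| < Real.sqrt (d:ℝ) := by
          rcases abs_cases y with ⟨ha, _⟩ | ⟨ha, _⟩
          · rw [ha]
            exact lt_of_le_of_ne hy.2 hyR.2
          · rw [ha]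
            have : -Real.sqrt (d:ℝ) ≠ y := fun h => hyR.1 h.symm
            have := lt_of_le_of_ne hy.1 this
            linarith
        have hy2 : y^2 < (d:ℝ) := by
          have h6 : y^2 = |y|^2 := (sq_abs y).symm
          have h7 : |y|^2 < Real.sqrt (d:ℝ)^2 := by nlinarith [abs_nonneg y]
          rw [Real.sq_sqrt hd.le] at h7
          rw [h6]
          exact h7
        have hfy := hf y hy.1 hy.2
        rw [hg, map_mul, map_sub, map_pow, Polynomial.aeval_X, Polynomial.aeval_C] at hfy
        rw [show ((algebraMap ↥F ℝ) d) = (d:ℝ) from rfl] at hfy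
        rw [map_neg]
        nlinarith [hfy]
      have hrepng : Rep F d (-g) :=
        ih g.natDegree hdeg_g (-g) (le_of_eq (Polynomial.natDegree_neg g)) hngnn
      have hfeq : f = (C d - X^2) * (-g) := by
        rw [hg]; ring
      rw [hfeq]
      exact rep_mul rep_D hrepng
    · push_neg at hend
      have hil : -Real.sqrt (d:ℝ) < x₀ := lt_of_le_of_ne h1 (Ne.symm hend.2)
      have hir : x₀ < Real.sqrt (d:ℝ) := lt_of_le_of_ne h2 hend.1
      obtain ⟨g, hg⟩ := interior_dvd hd hf0 hf hil hir hroot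
      set m : F[X] := minpoly F x₀ with hm
      have hint : IsIntegral F x₀ := IsAlgebraic.isIntegral ⟨f, hf0, hroot⟩
      have hmne : m ≠ 0 := (minpoly.monic hint).ne_zero
      have hm2ne : m^2 ≠ 0 := pow_ne_zero _ hmne
      have hgne : g ≠ 0 := by
        rintro rfl
        rw [mul_zero] at hg
        exact hf0 hg
      have hdegm : 0 < m.natDegree := minpoly.natDegree_pos hint
      have hdegf : f.natDegree = 2*m.natDegree + g.natDegree := by
        rw [hg, Polynomial.natDegree_mul hm2ne hgne, Polynomial.natDegree_pow]
      have hdeg_g : g.natDegree < n := by omega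
      set mr : ℝ[X] := m.map (algebraMap F ℝ) with hmr
      have hev_m : ∀ x : ℝ, Polynomial.aeval x m = mr.eval x := fun x => by
        rw [hmr, Polynomial.aeval_def, Polynomial.eval₂_eq_eval_map]
      have hmrne : mr ≠ 0 := by
        rw [hmr]
        exact (Polynomial.map_ne_zero_iff (algebraMap ↥F ℝ).injective).2 hmne
      have hgnn : ∀ x : ℝ, -Real.sqrt (d:ℝ) ≤ x → x ≤ Real.sqrt (d:ℝ) →
          0 ≤ Polynomial.aeval x g := by
        intro x hx1 hx2
        refine nonneg_extend hs (Polynomial.continuous_aeval g)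
          (Polynomial.finite_setOf_isRoot hmrne) ?_ x ⟨hx1, hx2⟩
        intro y hy hyR
        have hyne : mr.eval y ≠ 0 := hyR
        have hfy := hf y hy.1 hy.2
        rw [hg, map_mul, map_pow, hev_m] at hfy
        have hsqpos : 0 < (mr.eval y)^2 := by positivity
        nlinarith [hfy, hsqpos]
      have hrepg : Rep F d g := ih g.natDegree hdeg_g g (le_refl _) hgnn
      have hfeq : f = g * m^2 := by rw [hg]; ring
      rw [hfeq]
      exact rep_mul hrepg (rep_of_sws (sws_sq m))

end Main

end Stmt5Aux

theorem stmt5 (F : Subfield ℝ) (d : F) (hd : 0 < (d:ℝ)) (hirr : Real.sqrt (d:ℝ) ∉ F)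
    (f : F[X])
    (hf : ∀ x : ℝ, -Real.sqrt (d:ℝ) ≤ x → x ≤ Real.sqrt (d:ℝ) → 0 ≤ pev F f x) :
    ∃ σ₀ σ₁ : F[X], SumWtSq F σ₀ ∧ SumWtSq F σ₁ ∧
      f = σ₀ + σ₁ * (C d - X ^ 2) := by
  have hf' : ∀ x : ℝ, -Real.sqrt (d:ℝ) ≤ x → x ≤ Real.sqrt (d:ℝ) →
      0 ≤ Polynomial.aeval x f := hf
  exact Stmt5Aux.main_ind d hd hirr f.natDegree f (le_refl _) hf'
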